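/- Let k be a perfect field of characteristic p > 0, let R be a finitely generated commutative k-algebra, let e ≥ 1, and let φ : F^e_* R → R be a surjective R-linear map. Then the set of φ-compatible ideals of R is finite. -/

import Mathlib

open Submodule

/-- A subset of a lattice closed under `⊔`, `⊓`, with a least element, satisfying the
distributive law, and admitting a strictly monotone `ℕ`-valued function bounded by `n`,
is finite. -/
private lemma KM_distrib_finite {α : Type*} [Lattice α] :
    ∀ (n : ℕ) (S : Set α) (f : α → ℕ),
      (∃ z ∈ S, ∀ J ∈ S, z ≤ J) →
      (∀ x ∈ S, ∀ y ∈ S, x ⊔ y ∈ S) →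
      (∀ x ∈ S, ∀ y ∈ S, x ⊓ y ∈ S) →
      (∀ A ∈ S, ∀ B ∈ S, ∀ C ∈ S, (A ⊔ B) ⊓ C = A ⊓ C ⊔ B ⊓ C) →
      (∀ x ∈ S, ∀ y ∈ S, x < y → f x < f y) →
      (∀ x ∈ S, f x ≤ n) → S.Finite := by
  classical
  intro n
  induction n with
  | zero =>
      intro S f hz _ _ _ hmono hle
      obtain ⟨z, hzS, hzle⟩ := hz
      refine Set.Finite.subset (Set.finite_singleton z) ?_
      intro x hx
      rcases eq_or_lt_of_le (hzle x hx) with h | h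
      · exact Set.mem_singleton_iff.mpr h.symm
      · have h1 := hmono z hzS x hx h
        have h2 := hle x hx
        omega
  | succ n ih =>
      intro S f hz hsup hinf hdist hmono hle
      obtain ⟨z, hzS, hzle⟩ := hz
      by_cases hSz : S ⊆ {z}
      · exact Set.Finite.subset (Set.finite_singleton z) hSz
      obtain ⟨x₀, hx₀S, hx₀z⟩ : ∃ x ∈ S, x ≠ z := by
        rcases Set.not_subset.mp hSz with ⟨x, hxS, hxz⟩
        exact ⟨x, hxS, hxz⟩
      have hAne : {m | ∃ y, y ∈ S ∧ y ≠ z ∧ f y = m}.Nonempty := ⟨f x₀, x₀, hx₀S, hx₀z, rfl⟩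
      obtain ⟨a, haS, haz, hfa⟩ := Nat.sInf_mem hAne
      have hmin : ∀ y ∈ S, y ≠ z → f a ≤ f y := by
        intro y hy hyz
        rw [hfa]
        exact Nat.sInf_le ⟨y, hy, hyz, rfl⟩
      have hza : z < a := lt_of_le_of_ne (hzle a haS) (Ne.symm haz)
      have hfa1 : 1 ≤ f a := by have := hmono z hzS a haS hza; omega
      have key : ∀ x ∈ S, x ⊓ a = a ∨ x ⊓ a = z := by
        intro x hx
        by_cases hxz : x ⊓ a = z
        · exact Or.inr hxz
        · left
          have hmem : x ⊓ a ∈ S := hinf x hx a haS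
          rcases eq_or_lt_of_le (inf_le_right : x ⊓ a ≤ a) with h | h
          · exact h
          · have := hmono _ hmem _ haS h
            have := hmin _ hmem hxz
            omega
      set S' : Set α := {y | y ∈ S ∧ a ≤ y} with hS'def
      have hS'fin : S'.Finite := by
        apply ih S' (fun J => f J - f a)
        · exact ⟨a, ⟨haS, le_refl a⟩, fun J hJ => hJ.2⟩
        · intro x hx y hy
          exact ⟨hsup x hx.1 y hy.1, le_trans hx.2 le_sup_left⟩
        · intro x hx y hy
          exact ⟨hinf x hx.1 y hy.1, le_inf hx.2 hy.2⟩
        · intro A hA B hB C hC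
          exact hdist A hA.1 B hB.1 C hC.1
        · intro x hx y hy hxy
          have h1 : f x < f y := hmono x hx.1 y hy.1 hxy
          have h2 : f a ≤ f x := by
            rcases eq_or_lt_of_le hx.2 with h | h
            · exact le_of_eq (congrArg f h)
            · exact le_of_lt (hmono a haS x hx.1 h)
          omega
        · intro x hx
          have := hle x hx.1
          omega
      have himg : ∀ x ∈ S, (x ⊔ a) ∈ S' := fun x hx => ⟨hsup x hx a haS, le_sup_right⟩
      have hinj : Set.InjOn (fun x => (x ⊔ a, if x ⊓ a = a then (0 : ℕ) else 1)) S := by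
        intro x hx y hy heq
        have h1 : x ⊔ a = y ⊔ a := congrArg Prod.fst heq
        have h2 : (if x ⊓ a = a then (0 : ℕ) else 1) = (if y ⊓ a = a then (0 : ℕ) else 1) :=
          congrArg Prod.snd heq
        have hxa : x ⊓ a = y ⊓ a := by
          rcases key x hx with hx' | hx' <;> rcases key y hy with hy' | hy'
          · rw [hx', hy']
          · exfalso
            rw [if_pos hx', if_neg (fun hh => haz (hy'.symm.trans hh).symm)] at h2
            exact absurd h2 (by norm_num)
          · exfalso
            rw [if_neg (fun hh => haz (hx'.symm.trans hh).symm), if_pos hy'] at h2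
            exact absurd h2 (by norm_num)
          · rw [hx', hy']
        have hxx : x = (x ⊓ y) ⊔ (x ⊓ a) := by
          have hd := hdist y hy a haS x hx
          calc x = x ⊓ (x ⊔ a) := (inf_eq_left.mpr le_sup_left).symm
          _ = x ⊓ (y ⊔ a) := by rw [h1]
          _ = (y ⊔ a) ⊓ x := by rw [inf_comm]
          _ = y ⊓ x ⊔ a ⊓ x := hd
          _ = (x ⊓ y) ⊔ (x ⊓ a) := by rw [inf_comm y x, inf_comm a x]
        have hyy : y = (x ⊓ y) ⊔ (y ⊓ a) := by
          have hd := hdist x hx a haS y hy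
          calc y = y ⊓ (y ⊔ a) := (inf_eq_left.mpr le_sup_left).symm
          _ = y ⊓ (x ⊔ a) := by rw [← h1]
          _ = (x ⊔ a) ⊓ y := by rw [inf_comm]
          _ = x ⊓ y ⊔ a ⊓ y := hd
          _ = (x ⊓ y) ⊔ (y ⊓ a) := by rw [inf_comm a y]
        rw [hxa] at hxx
        exact hxx.trans hyy.symm
      have hfin2 : ((fun x => (x ⊔ a, if x ⊓ a = a then (0 : ℕ) else 1)) '' S).Finite := by
        apply Set.Finite.subset (hS'fin.prod ((Set.finite_singleton 1).insert 0))
        rintro _ ⟨x, hx, rfl⟩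
        dsimp only
        refine ⟨himg x hx, ?_⟩
        by_cases h : x ⊓ a = a
        · rw [if_pos h]; exact Set.mem_insert _ _
        · rw [if_neg h]; exact Set.mem_insert_of_mem _ rfl
      exact Set.Finite.of_finite_image hfin2 hinj

section Gauge

variable (k : Type*) {R ι : Type*} [Field k] [CommRing R] [Algebra k R] [Fintype ι]

/-- The span of monomials in the generators `g` of total degree at most `d`. -/
private def KMW (g : ι → R) (d : ℕ) : Submodule k R :=
  Submodule.span k {x : R | ∃ a : ι → ℕ, (∑ i, a i) ≤ d ∧ x = ∏ i, g i ^ a i}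

private lemma KMW_mono (g : ι → R) {d d' : ℕ} (h : d ≤ d') : KMW k g d ≤ KMW k g d' := by
  apply Submodule.span_mono
  rintro x ⟨a, ha, hx⟩
  exact ⟨a, ha.trans h, hx⟩

private lemma KM_monomial_mem (g : ι → R) {d : ℕ} (a : ι → ℕ) (h : (∑ i, a i) ≤ d) :
    (∏ i, g i ^ a i) ∈ KMW k g d :=
  Submodule.subset_span ⟨a, h, rfl⟩

private lemma KM_prod_pow_add (g : ι → R) (a b : ι → ℕ) :
    (∏ i, g i ^ a i) * (∏ i, g i ^ b i) = ∏ i, g i ^ (a i + b i) := by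
  rw [← Finset.prod_mul_distrib]
  exact Finset.prod_congr rfl fun i _ => (pow_add _ _ _).symm

private lemma KM_mul_mem (g : ι → R) {d₁ d₂ : ℕ} {x y : R}
    (hx : x ∈ KMW k g d₁) (hy : y ∈ KMW k g d₂) : x * y ∈ KMW k g (d₁ + d₂) := by
  induction hx using Submodule.span_induction with
  | mem x hx =>
      obtain ⟨a, ha, rfl⟩ := hx
      induction hy using Submodule.span_induction with
      | mem y hy =>
          obtain ⟨b, hb, rfl⟩ := hy
          rw [KM_prod_pow_add]
          apply KM_monomial_mem
          calc (∑ i, (a i + b i)) = (∑ i, a i) + (∑ i, b i) := Finset.sum_add_distrib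
          _ ≤ d₁ + d₂ := add_le_add ha hb
      | zero => rw [mul_zero]; exact zero_mem _
      | add y₁ y₂ hy₁ hy₂ ih₁ ih₂ => rw [mul_add]; exact add_mem ih₁ ih₂
      | smul c y hy ih => rw [mul_smul_comm]; exact Submodule.smul_mem _ c ih
  | zero => rw [zero_mul]; exact zero_mem _
  | add x₁ x₂ hx₁ hx₂ ih₁ ih₂ => rw [add_mul]; exact add_mem ih₁ ih₂
  | smul c x hx ih => rw [smul_mul_assoc]; exact Submodule.smul_mem _ c ih

private lemma KM_closure_monomial (g : ι → R) {y : R}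
    (hy : y ∈ Submonoid.closure (Set.range g)) : ∃ a : ι → ℕ, y = ∏ i, g i ^ a i := by
  induction hy using Submonoid.closure_induction with
  | mem y hy =>
      obtain ⟨i, rfl⟩ := hy
      classical
      refine ⟨fun j => if j = i then 1 else 0, ?_⟩
      have h1 : ∀ j : ι, g j ^ (if j = i then 1 else 0) = (if j = i then g j else 1) := by
        intro j; split <;> simp
      rw [Finset.prod_congr rfl (fun j _ => h1 j), Finset.prod_ite_eq' Finset.univ i g,
        if_pos (Finset.mem_univ i)]
  | one => exact ⟨0, by simp⟩
  | mul y₁ y₂ hy₁ hy₂ ih₁ ih₂ =>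
      obtain ⟨a, rfl⟩ := ih₁
      obtain ⟨b, rfl⟩ := ih₂
      exact ⟨fun i => a i + b i, by simpa using KM_prod_pow_add g a b⟩

private lemma KM_exists_mem (g : ι → R) (hgen : Algebra.adjoin k (Set.range g) = ⊤) (x : R) :
    ∃ d, x ∈ KMW k g d := by
  have hx : x ∈ Submodule.span k ((Submonoid.closure (Set.range g) : Submonoid R) : Set R) := by
    have h1 : x ∈ Subalgebra.toSubmodule (Algebra.adjoin k (Set.range g)) := by
      rw [hgen]; exact trivial
    rwa [Algebra.adjoin_eq_span] at h1
  induction hx using Submodule.span_induction with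
  | mem y hy =>
      obtain ⟨a, rfl⟩ := KM_closure_monomial g hy
      exact ⟨∑ i, a i, KM_monomial_mem k g a le_rfl⟩
  | zero => exact ⟨0, zero_mem _⟩
  | add y₁ y₂ hy₁ hy₂ ih₁ ih₂ =>
      obtain ⟨d₁, h₁⟩ := ih₁
      obtain ⟨d₂, h₂⟩ := ih₂
      exact ⟨max d₁ d₂, add_mem (KMW_mono k g (le_max_left _ _) h₁)
        (KMW_mono k g (le_max_right _ _) h₂)⟩
  | smul c y hy ih =>
      obtain ⟨d, hd⟩ := ih
      exact ⟨d, Submodule.smul_mem _ c hd⟩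

private lemma KM_monomial_split (g : ι → R) (q : ℕ) (a : ι → ℕ) :
    (∏ i, g i ^ a i) = (∏ i, g i ^ (a i / q)) ^ q * ∏ i, g i ^ (a i % q) := by
  rw [← Finset.prod_pow, ← Finset.prod_mul_distrib]
  refine Finset.prod_congr rfl fun i _ => ?_
  rw [← pow_mul, ← pow_add]
  congr 1
  rw [mul_comm]
  exact (Nat.div_add_mod (a i) q).symm

private lemma KM_decomp [DecidableEq ι] (g : ι → R) (q : ℕ) (hq0 : 0 < q)
    (hroot : ∀ c : k, ∃ b : k, b ^ q = c)
    (hfrob : ∀ x y : R, (x + y) ^ q = x ^ q + y ^ q)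
    (hgen : Algebra.adjoin k (Set.range g) = ⊤) (r : R) :
    ∃ s : (ι → Fin q) → R, r = ∑ c : ι → Fin q, (s c) ^ q * ∏ i, g i ^ ((c i : ℕ)) := by
  classical
  have hr : r ∈ Submodule.span k ((Submonoid.closure (Set.range g) : Submonoid R) : Set R) := by
    have h1 : r ∈ Subalgebra.toSubmodule (Algebra.adjoin k (Set.range g)) := by
      rw [hgen]; exact trivial
    rwa [Algebra.adjoin_eq_span] at h1
  induction hr using Submodule.span_induction with
  | mem y hy =>
      obtain ⟨a, rfl⟩ := KM_closure_monomial g hy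
      set cf : ι → Fin q := fun i => ⟨a i % q, Nat.mod_lt _ hq0⟩ with hcf
      refine ⟨fun c => if c = cf then ∏ i, g i ^ (a i / q) else 0, ?_⟩
      rw [Finset.sum_eq_single cf]
      · dsimp only
        rw [if_pos rfl]
        exact KM_monomial_split g q a
      · intro c _ hc
        dsimp only
        rw [if_neg hc, zero_pow hq0.ne', zero_mul]
      · intro h
        exact absurd (Finset.mem_univ cf) h
  | zero =>
      refine ⟨0, ?_⟩
      simp [zero_pow hq0.ne']
  | add y₁ y₂ hy₁ hy₂ ih₁ ih₂ =>
      obtain ⟨s₁, rfl⟩ := ih₁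
      obtain ⟨s₂, rfl⟩ := ih₂
      refine ⟨fun c => s₁ c + s₂ c, ?_⟩
      rw [← Finset.sum_add_distrib]
      refine Finset.sum_congr rfl fun c _ => ?_
      rw [hfrob, add_mul]
  | smul c y hy ih =>
      obtain ⟨s, rfl⟩ := ih
      obtain ⟨b, hb⟩ := hroot c
      refine ⟨fun t => algebraMap k R b * s t, ?_⟩
      have h1 : ∀ t : ι → Fin q,
          (algebraMap k R b * s t) ^ q * ∏ i, g i ^ ((t i : ℕ))
            = algebraMap k R c * ((s t) ^ q * ∏ i, g i ^ ((t i : ℕ))) := by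
        intro t
        rw [mul_pow, ← map_pow, hb, mul_assoc]
      rw [Finset.sum_congr rfl fun t _ => h1 t, ← Finset.mul_sum, ← Algebra.smul_def]

private lemma KM_phi_mem [DecidableEq ι] (g : ι → R) (φ : R → R) (q : ℕ) (hq0 : 0 < q)
    (hadd : ∀ x y : R, φ (x + y) = φ x + φ y)
    (hlin : ∀ r x : R, φ (r ^ q * x) = r * φ x)
    (hroot : ∀ c : k, ∃ b : k, b ^ q = c)
    (D : ℕ) (hD : ∀ c : ι → Fin q, φ (∏ i, g i ^ ((c i : ℕ))) ∈ KMW k g D)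
    (d : ℕ) : ∀ x ∈ KMW k g d, φ x ∈ KMW k g (d / q + D) := by
  have hphi0 : φ 0 = 0 := by
    have h := hadd 0 0
    rw [add_zero] at h
    exact (left_eq_add.mp h)
  intro x hx
  induction hx using Submodule.span_induction with
  | mem y hy =>
      obtain ⟨a, ha, rfl⟩ := hy
      have hsplit := KM_monomial_split g q a
      set c : ι → Fin q := fun i => ⟨a i % q, Nat.mod_lt _ hq0⟩ with hc
      have hτ : (∏ i, g i ^ (a i % q)) = ∏ i, g i ^ ((c i : ℕ)) := rfl
      rw [hsplit, hτ, hlin]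
      have h1 : (∏ i, g i ^ (a i / q)) ∈ KMW k g (d / q) := by
        apply KM_monomial_mem
        rw [Nat.le_div_iff_mul_le hq0]
        calc (∑ i, a i / q) * q = ∑ i, (a i / q) * q := Finset.sum_mul _ _ _
        _ ≤ ∑ i, a i := Finset.sum_le_sum fun i _ => Nat.div_mul_le_self (a i) q
        _ ≤ d := ha
      exact KM_mul_mem k g h1 (hD c)
  | zero => rw [hphi0]; exact zero_mem _
  | add y₁ y₂ hy₁ hy₂ ih₁ ih₂ => rw [hadd]; exact add_mem ih₁ ih₂
  | smul co y hy ih =>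
      obtain ⟨b, hb⟩ := hroot co
      have h1 : co • y = (algebraMap k R b) ^ q * y := by
        rw [Algebra.smul_def, ← map_pow, hb]
      rw [h1, hlin, ← Algebra.smul_def]
      exact Submodule.smul_mem _ b ih

end Gauge

/-- If `R` is a finitely generated algebra over a perfect field of
characteristic `p > 0` and `φ : F^e_* R → R` is a surjective `R`-linear map,
there are only finitely many `φ`-compatible ideals. -/
theorem stmt_1 {k : Type*} [Field k] (p : ℕ) (hp : p.Prime) [CharP k p]
    [PerfectField k]
    {R : Type*} [CommRing R] [Algebra k R] [Algebra.FiniteType k R]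
    (e : ℕ) (he : 1 ≤ e)
    (φ : R → R)
    (hadd : ∀ x y : R, φ (x + y) = φ x + φ y)
    (hlin : ∀ r x : R, φ (r ^ p ^ e * x) = r * φ x)
    (hsurj : Function.Surjective φ) :
    {J : Ideal R | ∀ x ∈ J, φ x ∈ J}.Finite := by
  classical
  haveI : Fact p.Prime := ⟨hp⟩
  set q := p ^ e with hqdef
  have hq1 : 1 < q := Nat.one_lt_pow (by omega) hp.one_lt
  have hq0 : 0 < q := by omega
  rcases subsingleton_or_nontrivial R with hR | hR
  · refine Set.Finite.subset (Set.finite_singleton ⊤) ?_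
    intro J _
    have h1 : (1 : R) ∈ J := by
      rw [Subsingleton.elim (1 : R) 0]
      exact J.zero_mem
    have : J = ⊤ := (Ideal.eq_top_iff_one J).mpr h1
    exact Set.mem_singleton_iff.mpr this
  haveI : CharP R p := charP_of_injective_algebraMap (algebraMap k R).injective p
  haveI : IsNoetherianRing R := Algebra.FiniteType.isNoetherianRing k R
  -- q-th roots in k
  have hroot : ∀ c : k, ∃ b : k, b ^ q = c := by
    have key : ∀ (n : ℕ) (c : k), ∃ b : k, b ^ (p ^ n) = c := by
      intro n
      induction n with
      | zero => intro c; exact ⟨c, by simp⟩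
      | succ n ihn =>
          intro c
          obtain ⟨d, hd⟩ := surjective_frobenius k p c
          obtain ⟨b, hb⟩ := ihn d
          refine ⟨b, ?_⟩
          rw [pow_succ, pow_mul, hb]
          rwa [frobenius_def] at hd
    exact key e
  have hfrob : ∀ x y : R, (x + y) ^ q = x ^ q + y ^ q := fun x y =>
    add_pow_char_pow x y p e
  -- generators
  obtain ⟨sF, hsF⟩ := (inferInstance : Algebra.FiniteType k R).out
  set g : (↥sF) → R := fun x => (x : R) with hgdef
  have hgen : Algebra.adjoin k (Set.range g) = ⊤ := by
    have hr : Set.range g = (sF : Set R) := by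
      ext y
      constructor
      · rintro ⟨x, rfl⟩; exact x.2
      · intro hy; exact ⟨⟨y, hy⟩, rfl⟩
    rw [hr, hsF]
  obtain ⟨u, hu⟩ := hsurj 1
  have hlin' : ∀ r x : R, φ (r ^ q * x) = r * φ x := hlin
  have hphi0 : φ 0 = 0 := by
    have h := hadd 0 0
    rw [add_zero] at h
    exact (left_eq_add.mp h)
  -- the degree bound data
  set τ : ((↥sF) → Fin q) → R := fun c => ∏ i, g i ^ ((c i : ℕ)) with hτdef
  have hDex : ∀ c : (↥sF) → Fin q, ∃ d, φ (τ c) ∈ KMW k g d :=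
    fun c => KM_exists_mem k g hgen (φ (τ c))
  choose df hdf using hDex
  set D := Finset.univ.sup df with hDdef
  have hD : ∀ c : (↥sF) → Fin q, φ (τ c) ∈ KMW k g D :=
    fun c => KMW_mono k g (Finset.le_sup (Finset.mem_univ c)) (hdf c)
  set CC := (Fintype.card ↥sF) * (q - 1) with hCCdef
  have hτCC : ∀ c : (↥sF) → Fin q, τ c ∈ KMW k g CC := by
    intro c
    apply KM_monomial_mem
    calc (∑ i, ((c i : ℕ))) ≤ ∑ _i : ↥sF, (q - 1) :=
          Finset.sum_le_sum fun i _ => by have := (c i).isLt; omega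
    _ = CC := by rw [Finset.sum_const, smul_eq_mul, Finset.card_univ]
  set B := CC + 2 * D + 2 with hBdef
  set S := {J : Ideal R | ∀ x ∈ J, φ x ∈ J} with hSdef
  have hdec := KM_decomp k g q hq0 hroot hfrob hgen
  have hphiW := KM_phi_mem k g φ q hq0 hadd hlin' hroot D hD
  have hpowmem : ∀ J ∈ S, ∀ x : R, x ^ q ∈ J → x ∈ J := by
    intro J hJ x hx
    have h1 : x ^ q * u ∈ J := Ideal.mul_mem_right u J hx
    have h2 := hJ _ h1
    rwa [hlin', hu, mul_one] at h2
  -- uniform generation bound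
  have hgauge : ∀ J ∈ S, J = Ideal.span ((J : Set R) ∩ (KMW k g B : Set R)) := by
    intro J hJS
    obtain ⟨G, hG⟩ := (IsNoetherian.noetherian J : J.FG)
    choose dG hdG using fun x : R => KM_exists_mem k g hgen x
    have hstart : J = Ideal.span ((J : Set R) ∩ (KMW k g (G.sup dG) : Set R)) := by
      apply le_antisymm
      · conv_lhs => rw [← hG]
        apply Ideal.span_le.mpr
        intro x hxG
        refine Ideal.subset_span ⟨?_, KMW_mono k g (Finset.le_sup hxG) (hdG x)⟩
        rw [← hG]
        exact Ideal.subset_span hxG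
      · apply Ideal.span_le.mpr
        exact fun x hx => hx.1
    have hdesc : ∀ d : ℕ, J = Ideal.span ((J : Set R) ∩ (KMW k g d : Set R)) →
        J = Ideal.span ((J : Set R) ∩ (KMW k g ((CC + d) / q + D) : Set R)) := by
      intro d hJd
      apply le_antisymm
      swap
      · apply Ideal.span_le.mpr
        exact fun x hx => hx.1
      · intro x hxJ
        have hxq : x ^ q * u ∈ Ideal.span ((J : Set R) ∩ (KMW k g d : Set R)) := by
          rw [← hJd]
          exact Ideal.mul_mem_right u J (Ideal.pow_mem_of_mem J hxJ q hq0)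
        have main : ∀ z ∈ Ideal.span ((J : Set R) ∩ (KMW k g d : Set R)), ∀ r : R,
            φ (r * z) ∈ Ideal.span ((J : Set R) ∩ (KMW k g ((CC + d) / q + D) : Set R)) := by
          intro z hz
          induction hz using Submodule.span_induction with
          | mem z hzmem =>
              obtain ⟨hzJ, hzW⟩ := hzmem
              intro r
              obtain ⟨sf, hsf⟩ := hdec r
              have hrz : r * z = ∑ c : (↥sF) → Fin q, (sf c) ^ q * (τ c * z) := by
                rw [hsf, Finset.sum_mul]
                exact Finset.sum_congr rfl fun c _ => by rw [hτdef]; ring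
              rw [hrz]
              have hφsum : ∀ (t : Finset ((↥sF) → Fin q)),
                  φ (∑ c ∈ t, (sf c) ^ q * (τ c * z)) = ∑ c ∈ t, φ ((sf c) ^ q * (τ c * z)) := by
                intro t
                refine Finset.induction_on t ?_ ?_
                · simpa using hphi0
                · intro a t' ha ih
                  rw [Finset.sum_insert ha, Finset.sum_insert ha, hadd, ih]
              have hsum : φ (∑ c : (↥sF) → Fin q, (sf c) ^ q * (τ c * z))
                  = ∑ c : (↥sF) → Fin q, sf c * φ (τ c * z) := by
                rw [hφsum Finset.univ]
                exact Finset.sum_congr rfl fun c _ => hlin' (sf c) (τ c * z)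
              rw [hsum]
              apply Submodule.sum_mem
              intro c _
              have hmem : φ (τ c * z) ∈ (J : Set R) ∩ (KMW k g ((CC + d) / q + D) : Set R) := by
                constructor
                · exact hJS _ (Ideal.mul_mem_left J (τ c) hzJ)
                · exact hphiW (CC + d) _ (KM_mul_mem k g (hτCC c) hzW)
              exact Ideal.mul_mem_left _ (sf c) (Ideal.subset_span hmem)
          | zero =>
              intro r
              rw [mul_zero, hphi0]
              exact zero_mem _
          | add z₁ z₂ hz₁ hz₂ ih₁ ih₂ =>
              intro r
              rw [mul_add, hadd]
              exact add_mem (ih₁ r) (ih₂ r)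
          | smul r' z hz ih =>
              intro r
              rw [smul_eq_mul, show r * (r' * z) = (r * r') * z from (mul_assoc r r' z).symm]
              exact ih (r * r')
        have hfin := main _ hxq 1
        rwa [one_mul, hlin', hu, mul_one] at hfin
    have hstep : ∀ d : ℕ, J = Ideal.span ((J : Set R) ∩ (KMW k g d : Set R)) →
        J = Ideal.span ((J : Set R) ∩ (KMW k g B : Set R)) := by
      intro d
      induction d using Nat.strong_induction_on with
      | _ d ihd =>
        intro hd
        by_cases hdB : d ≤ B
        · apply le_antisymm
          · calc J = Ideal.span ((J : Set R) ∩ (KMW k g d : Set R)) := hd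
            _ ≤ Ideal.span ((J : Set R) ∩ (KMW k g B : Set R)) :=
              Ideal.span_mono (Set.inter_subset_inter_right _ (KMW_mono k g hdB))
          · apply Ideal.span_le.mpr
            exact fun x hx => hx.1
        · push_neg at hdB
          have harith : (CC + d) / q + D < d := by
            have h2 : (CC + d) / q ≤ (CC + d) / 2 := Nat.div_le_div_left (by omega) (by omega)
            have h3 : (CC + d) / 2 < d - D := by
              rw [Nat.div_lt_iff_lt_mul (by omega : 0 < 2)]
              omega
            omega
          exact ihd _ harith (hdesc d hd)
    exact hstep _ hstart
  -- finite dimensionality of the bounded piece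
  haveI hWfd : FiniteDimensional k (KMW k g B) := by
    apply FiniteDimensional.span_of_finite
    have hsub : {x : R | ∃ a : (↥sF) → ℕ, (∑ i, a i) ≤ B ∧ x = ∏ i, g i ^ a i} ⊆
        Set.range (fun a : (↥sF) → Fin (B + 1) => ∏ i, g i ^ ((a i : ℕ))) := by
      rintro x ⟨a, ha, rfl⟩
      refine ⟨fun i => ⟨a i, ?_⟩, rfl⟩
      have h1 : a i ≤ ∑ j, a j :=
        Finset.single_le_sum (fun j _ => Nat.zero_le _) (Finset.mem_univ i)
      omega
    exact Set.Finite.subset (Set.finite_range _) hsub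
  set f : Ideal R → ℕ := fun J =>
    Module.finrank k (Submodule.comap (KMW k g B).subtype (Submodule.restrictScalars k J))
    with hfdef
  have hrecover : ∀ J ∈ S, ∀ J' ∈ S,
      Submodule.comap (KMW k g B).subtype (Submodule.restrictScalars k J) =
        Submodule.comap (KMW k g B).subtype (Submodule.restrictScalars k J') → J = J' := by
    intro J hJ J' hJ' h
    have hset : (J : Set R) ∩ (KMW k g B : Set R) = (J' : Set R) ∩ (KMW k g B : Set R) := by
      ext x
      constructor
      · rintro ⟨hxJ, hxW⟩
        have h1 : (⟨x, hxW⟩ : KMW k g B) ∈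
            Submodule.comap (KMW k g B).subtype (Submodule.restrictScalars k J) := hxJ
        rw [h] at h1
        exact ⟨h1, hxW⟩
      · rintro ⟨hxJ, hxW⟩
        have h1 : (⟨x, hxW⟩ : KMW k g B) ∈
            Submodule.comap (KMW k g B).subtype (Submodule.restrictScalars k J') := hxJ
        rw [← h] at h1
        exact ⟨h1, hxW⟩
    rw [hgauge J hJ, hgauge J' hJ', hset]
  have hmonof : ∀ J ∈ S, ∀ J' ∈ S, J < J' → f J < f J' := by
    intro J hJ J' hJ' hlt
    apply finrank_lt_finrank_of_lt
    refine lt_of_le_of_ne ?_ ?_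
    · intro x hx
      exact hlt.le hx
    · intro h
      exact (ne_of_lt hlt) (hrecover J hJ J' hJ' h)
  have hlef : ∀ J ∈ S, f J ≤ Module.finrank k (KMW k g B) := fun J _ =>
    Submodule.finrank_le _
  have hbot : (⊥ : Ideal R) ∈ S := by
    intro x hx
    rw [Ideal.mem_bot] at hx
    subst hx
    rw [hphi0]
    exact Ideal.zero_mem _
  have hsupS : ∀ J ∈ S, ∀ K ∈ S, J ⊔ K ∈ S := by
    intro J hJ K hK x hx
    rcases Submodule.mem_sup.mp hx with ⟨y, hy, z, hz, rfl⟩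
    rw [hadd]
    exact Submodule.mem_sup.mpr ⟨φ y, hJ y hy, φ z, hK z hz, rfl⟩
  have hinfS : ∀ J ∈ S, ∀ K ∈ S, J ⊓ K ∈ S := by
    intro J hJ K hK x hx
    exact ⟨hJ x hx.1, hK x hx.2⟩
  have hradS : ∀ J ∈ S, J.radical ≤ J := by
    intro J hJ x hx
    obtain ⟨m, hm⟩ := hx
    have hqm : ∀ s : ℕ, x ^ (q ^ s) ∈ J → x ∈ J := by
      intro s
      induction s with
      | zero => intro h; rw [pow_zero, pow_one] at h; exact h
      | succ s ihs =>
          intro h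
          apply ihs
          apply hpowmem J hJ
          rwa [← pow_mul, ← pow_succ]
    apply hqm m
    have hmle : m ≤ q ^ m := Nat.le_of_lt (Nat.lt_pow_self (n := m) hq1)
    have hxqm : x ^ (q ^ m) = x ^ m * x ^ (q ^ m - m) := by
      rw [← pow_add]
      congr 1
      omega
    rw [hxqm]
    exact Ideal.mul_mem_right _ J hm
  have hprime_inf : ∀ P : Ideal R, P.IsPrime → ∀ I J : Ideal R, I ⊓ J ≤ P → I ≤ P ∨ J ≤ P := by
    intro P hP I J h
    by_cases hI : I ≤ P
    · exact Or.inl hI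
    · right
      obtain ⟨i, hiI, hiP⟩ := SetLike.not_le_iff_exists.mp hI
      intro j hj
      have hij : i * j ∈ I ⊓ J := ⟨Ideal.mul_mem_right j I hiI, Ideal.mul_mem_left J i hj⟩
      rcases hP.mem_or_mem (h hij) with h' | h'
      · exact absurd h' hiP
      · exact h'
  have hdistS : ∀ A ∈ S, ∀ B' ∈ S, ∀ C ∈ S, (A ⊔ B') ⊓ C = A ⊓ C ⊔ B' ⊓ C := by
    intro A hA B' hB' C hC
    apply le_antisymm
    · have hRHSS : A ⊓ C ⊔ B' ⊓ C ∈ S :=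
        hsupS _ (hinfS A hA C hC) _ (hinfS B' hB' C hC)
      refine le_trans ?_ (hradS _ hRHSS)
      rw [Ideal.radical_eq_sInf]
      apply le_sInf
      rintro P ⟨hRP, hPprime⟩
      have h1 : A ⊓ C ≤ P := le_trans le_sup_left hRP
      have h2 : B' ⊓ C ≤ P := le_trans le_sup_right hRP
      rcases hprime_inf P hPprime A C h1 with hA' | hC'
      · rcases hprime_inf P hPprime B' C h2 with hB'' | hC'
        · exact le_trans inf_le_left (sup_le hA' hB'')
        · exact le_trans inf_le_right hC'
      · exact le_trans inf_le_right hC'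
    · exact sup_le (inf_le_inf_right C le_sup_left) (inf_le_inf_right C le_sup_right)
  exact KM_distrib_finite (Module.finrank k (KMW k g B)) S f
    ⟨⊥, hbot, fun J _ => bot_le⟩ hsupS hinfS hdistS hmonof hlef
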